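/- arXiv:2210.06232 — 3 statements merged into one kernel-verified Lean document; each statement's English description precedes it below -/
import Mathlib

section
/- Let Ω1, Ω2, Ω3 be pairwise commuting n×n complex matrices and let K be the 3n×3n block matrix K = [[0, −Ω3, Ω2], [Ω3, 0, −Ω1], [−Ω2, Ω1, 0]]. Then K³ = −P·K, where P is the block-diagonal 3n×3n matrix with each diagonal block equal to Ψ := Ω1² + Ω2² + Ω3². -/
open Matrix

/-- A `3n × 3n` block matrix built from a `3 × 3` array of `n × n` blocks. -/
def blockMat3 {n : ℕ} {α : Type*} (A : Fin 3 → Fin 3 → Matrix (Fin n) (Fin n) α) :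
    Matrix (Fin 3 × Fin n) (Fin 3 × Fin n) α :=
  Matrix.of fun p q => A p.1 q.1 p.2 q.2

lemma blockMat3_mul {n : ℕ} (A B : Fin 3 → Fin 3 → Matrix (Fin n) (Fin n) ℂ) :
    blockMat3 A * blockMat3 B
      = blockMat3 (fun i k => A i 0 * B 0 k + A i 1 * B 1 k + A i 2 * B 2 k) := by
  ext p q
  simp [blockMat3, Matrix.mul_apply, Fintype.sum_prod_type, Fin.sum_univ_three,
    Finset.sum_add_distrib]

lemma blockMat3_neg {n : ℕ} (A : Fin 3 → Fin 3 → Matrix (Fin n) (Fin n) ℂ) :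
    -blockMat3 A = blockMat3 (fun i k => -(A i k)) := rfl

/-- for pairwise commuting `Ω1, Ω2, Ω3`, the cross-product block matrix
`K = [[0,-Ω3,Ω2],[Ω3,0,-Ω1],[-Ω2,Ω1,0]]` satisfies `K³ = -P·K`, where `P` is block
diagonal with blocks `Ψ = Ω1² + Ω2² + Ω3²`. -/
theorem cross_block_cube {n : ℕ} (Ω1 Ω2 Ω3 : Matrix (Fin n) (Fin n) ℂ)
    (h12 : Ω1 * Ω2 = Ω2 * Ω1) (h13 : Ω1 * Ω3 = Ω3 * Ω1) (h23 : Ω2 * Ω3 = Ω3 * Ω2)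
    (K P : Matrix (Fin 3 × Fin n) (Fin 3 × Fin n) ℂ)
    (hK : K = blockMat3 ![![0, -Ω3, Ω2], ![Ω3, 0, -Ω1], ![-Ω2, Ω1, 0]])
    (hP : P = blockMat3
      ![![Ω1 ^ 2 + Ω2 ^ 2 + Ω3 ^ 2, 0, 0],
        ![0, Ω1 ^ 2 + Ω2 ^ 2 + Ω3 ^ 2, 0],
        ![0, 0, Ω1 ^ 2 + Ω2 ^ 2 + Ω3 ^ 2]]) :
    K ^ 3 = -(P * K) := by
  subst hK hP
  rw [pow_succ, pow_succ, pow_one, blockMat3_mul, blockMat3_mul, blockMat3_mul, blockMat3_neg]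
  have H12 : ∀ x : Matrix (Fin n) (Fin n) ℂ, Ω1 * (Ω2 * x) = Ω2 * (Ω1 * x) := fun x => by
    rw [← mul_assoc, h12, mul_assoc]
  have H13 : ∀ x : Matrix (Fin n) (Fin n) ℂ, Ω1 * (Ω3 * x) = Ω3 * (Ω1 * x) := fun x => by
    rw [← mul_assoc, h13, mul_assoc]
  have H23 : ∀ x : Matrix (Fin n) (Fin n) ℂ, Ω2 * (Ω3 * x) = Ω3 * (Ω2 * x) := fun x => by
    rw [← mul_assoc, h23, mul_assoc]
  refine congrArg blockMat3 ?_
  funext i k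
  fin_cases i <;> fin_cases k <;>
    simp [Matrix.cons_val_zero, Matrix.cons_val_one, Matrix.vecHead, Matrix.vecTail] <;>
    noncomm_ring <;>
    simp only [h12, h13, h23, H12, H13, H23] <;>
    abel
end

section
/- Let K and P be n×n complex matrices such that K·P = P·K and K³ = −P·K. Then exp(K) = I + S·K + C·K², where S := Σ_{m=0}^∞ (−1)^m P^m/(2m+1)! and C := Σ_{m=0}^∞ (−1)^m P^m/(2m+2)! (both series converge absolutely in the matrix norm). -/
open Matrix

/-- if `K·P = P·K` and `K³ = -P·K`, then
`exp K = I + S·K + C·K²` where `S = Σ (-1)^m P^m/(2m+1)!` and `C = Σ (-1)^m P^m/(2m+2)!`,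
both series being convergent. -/
theorem exp_of_cube_relation {n : ℕ} (K P : Matrix (Fin n) (Fin n) ℂ)
    (hcomm : K * P = P * K) (hcube : K ^ 3 = -(P * K))
    (S C : Matrix (Fin n) (Fin n) ℂ)
    (hS : S = ∑' m : ℕ, ((-1 : ℂ) ^ m * ((Nat.factorial (2 * m + 1) : ℂ))⁻¹) • P ^ m)
    (hC : C = ∑' m : ℕ, ((-1 : ℂ) ^ m * ((Nat.factorial (2 * m + 2) : ℂ))⁻¹) • P ^ m) :
    (Summable fun m : ℕ => ((-1 : ℂ) ^ m * ((Nat.factorial (2 * m + 1) : ℂ))⁻¹) • P ^ m) ∧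
    (Summable fun m : ℕ => ((-1 : ℂ) ^ m * ((Nat.factorial (2 * m + 2) : ℂ))⁻¹) • P ^ m) ∧
    NormedSpace.exp K = 1 + S * K + C * K ^ 2 := by
  letI : SeminormedRing (Matrix (Fin n) (Fin n) ℂ) := Matrix.linftyOpSemiNormedRing
  letI : NormedRing (Matrix (Fin n) (Fin n) ℂ) := Matrix.linftyOpNormedRing
  letI : NormedAlgebra ℂ (Matrix (Fin n) (Fin n) ℂ) := Matrix.linftyOpNormedAlgebra
  -- summability of the two auxiliary series
  have key : ∀ a : ℕ,
      Summable fun m : ℕ => ((-1 : ℂ) ^ m * ((Nat.factorial (2 * m + a) : ℂ))⁻¹) • P ^ m := by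
    intro a
    apply Summable.of_norm
    refine Summable.of_nonneg_of_le (fun m => norm_nonneg _) (fun m => ?_)
      (Real.summable_pow_div_factorial ‖P‖)
    rw [norm_smul, norm_mul, norm_pow, norm_neg, norm_one, one_pow, one_mul, norm_inv]
    have h1 : ‖((Nat.factorial (2 * m + a) : ℂ))‖⁻¹ ≤ ((Nat.factorial m : ℝ))⁻¹ := by
      rw [Complex.norm_natCast]
      apply inv_anti₀
      · exact_mod_cast Nat.factorial_pos m
      · exact_mod_cast Nat.factorial_le (by omega)
    have h2 : ‖P ^ m‖ ≤ ‖P‖ ^ m := by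
      rcases Nat.eq_zero_or_pos m with hm | hm
      · subst hm
        simp only [pow_zero]
        rcases Nat.eq_zero_or_pos n with hn | hn
        · have : (1 : Matrix (Fin n) (Fin n) ℂ) = 0 := by
            subst hn; ext i; exact absurd i.2 (by omega)
          rw [this, norm_zero]; norm_num
        · haveI : Nonempty (Fin n) := ⟨⟨0, hn⟩⟩
          rw [norm_one]
      · exact norm_pow_le' P hm
    calc ‖((Nat.factorial (2 * m + a) : ℂ))‖⁻¹ * ‖P ^ m‖
        ≤ ((Nat.factorial m : ℝ))⁻¹ * ‖P‖ ^ m := by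
          apply mul_le_mul h1 h2 (norm_nonneg _)
          positivity
      _ = ‖P‖ ^ m / (Nat.factorial m : ℝ) := by rw [div_eq_mul_inv, mul_comm]
  refine ⟨key 1, key 2, ?_⟩
  -- power identities
  have hcube' : K ^ 3 = (-P) * K := by rw [hcube, neg_mul]
  have hpow : ∀ m : ℕ, K ^ (2 * m + 1) = (-P) ^ m * K := by
    intro m
    induction m with
    | zero => simp
    | succ m ih =>
      have h21 : 2 * (m + 1) + 1 = (2 * m + 1) + 2 := by ring
      have h3 : K * K ^ 2 = K ^ 3 := (pow_succ' K 2).symm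
      rw [h21, pow_add, ih, mul_assoc, h3, hcube', ← mul_assoc, ← pow_succ]
  have hpow2 : ∀ m : ℕ, K ^ (2 * m + 2) = (-P) ^ m * K ^ 2 := by
    intro m
    have : K ^ (2 * m + 2) = K ^ (2 * m + 1) * K := by rw [← pow_succ]
    rw [this, hpow m, mul_assoc, ← pow_two]
  have hneg : ∀ m : ℕ, (-P) ^ m = ((-1 : ℂ) ^ m) • P ^ m := by
    intro m
    rw [← neg_one_smul ℂ P, smul_pow]
  -- the exponential series
  have hf : Summable fun k : ℕ => ((Nat.factorial k : ℂ))⁻¹ • K ^ k :=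
    NormedSpace.expSeries_summable' (𝕂 := ℂ) K
  set f : ℕ → Matrix (Fin n) (Fin n) ℂ := fun k => ((Nat.factorial k : ℂ))⁻¹ • K ^ k with hfdef
  have hfe : Summable fun m : ℕ => f (2 * m) :=
    hf.comp_injective fun a b h => by omega
  have hfo : Summable fun m : ℕ => f (2 * m + 1) :=
    hf.comp_injective fun a b h => by omega
  have hsplit : NormedSpace.exp K = (∑' m : ℕ, f (2 * m)) + ∑' m : ℕ, f (2 * m + 1) := by
    rw [NormedSpace.exp_eq_tsum (𝕂 := ℂ)]
    show (∑' k : ℕ, f k) = _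
    exact (hfe.hasSum.even_add_odd hfo.hasSum).tsum_eq
  have heven : (∑' m : ℕ, f (2 * m)) = f 0 + ∑' m : ℕ, f (2 * m + 2) := by
    rw [Summable.tsum_eq_zero_add hfe]
    congr 1
  have hf0 : f 0 = 1 := by simp [hfdef]
  -- identify the odd part
  have hodd_term : ∀ m : ℕ, f (2 * m + 1)
      = (((-1 : ℂ) ^ m * ((Nat.factorial (2 * m + 1) : ℂ))⁻¹) • P ^ m) * K := by
    intro m
    rw [hfdef]
    simp only
    rw [hpow m, hneg m, smul_mul_assoc, smul_mul_assoc, smul_smul,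
      mul_comm (((Nat.factorial (2 * m + 1) : ℂ))⁻¹) (((-1 : ℂ) ^ m))]
  have heven_term : ∀ m : ℕ, f (2 * m + 2)
      = (((-1 : ℂ) ^ m * ((Nat.factorial (2 * m + 2) : ℂ))⁻¹) • P ^ m) * K ^ 2 := by
    intro m
    rw [hfdef]
    simp only
    rw [hpow2 m, hneg m, smul_mul_assoc, smul_mul_assoc, smul_smul,
      mul_comm (((Nat.factorial (2 * m + 2) : ℂ))⁻¹) (((-1 : ℂ) ^ m))]
  have hoddsum : (∑' m : ℕ, f (2 * m + 1)) = S * K := by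
    rw [hS, ← (key 1).tsum_mul_right K]
    exact tsum_congr hodd_term
  have hevensum : (∑' m : ℕ, f (2 * m + 2)) = C * K ^ 2 := by
    rw [hC, ← (key 2).tsum_mul_right (K ^ 2)]
    exact tsum_congr heven_term
  rw [hsplit, heven, hf0, hoddsum, hevensum]
  abel
end

section
/- Let Ω1, Ω2, Ω3 be pairwise commuting n×n complex matrices, Ψ := Ω1² + Ω2² + Ω3², K := [[0, −Ω3, Ω2], [Ω3, 0, −Ω1], [−Ω2, Ω1, 0]] (a 3n×3n block matrix), and Λ := i·K. For t ∈ ℝ set S_t := Σ_{m=0}^∞ (−1)^m t^(2m) Ψ^m/(2m+1)! and C_t := Σ_{m=0}^∞ (−1)^(m+1) t^(2m) Ψ^m/(2m+2)!. Then cos(tΛ) is the block matrix with diagonal blocks I + t²(Ω3²+Ω2²)C_t, I + t²(Ω3²+Ω1²)C_t, I + t²(Ω2²+Ω1²)C_t, and off-diagonal blocks (1,2) = (2,1) = −t²Ω2Ω1C_t, (1,3) = (3,1) = −t²Ω3Ω1C_t, (2,3) = (3,2) = −t²Ω3Ω2C_t; and sin(tΛ) = [[0, −s12, s13], [s12, 0,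 −s23], [−s13, s23, 0]] with s12 = i t Ω3 S_t, s13 = i t Ω2 S_t, s23 = i t Ω1 S_t. -/
open Matrix

open NormedSpace in
private lemma summable_smul_pow' {𝔸 : Type*} [NormedRing 𝔸] [NormedAlgebra ℂ 𝔸] [CompleteSpace 𝔸]
    (x : 𝔸) (r : ℝ) (a : ℕ → ℂ) (h : ∀ m, ‖a m‖ ≤ r ^ m / Nat.factorial m) :
    Summable fun m : ℕ => a m • x ^ m := by
  set M : ℝ := max 1 ‖(1:𝔸)‖ with hMdef
  have hM1 : (1:ℝ) ≤ M := le_max_left _ _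
  have hM : ∀ m : ℕ, ‖x ^ m‖ ≤ M * ‖x‖ ^ m := by
    intro m
    rcases Nat.eq_zero_or_pos m with hm | hm
    · subst hm
      simp only [pow_zero, mul_one]
      exact le_max_right 1 ‖(1:𝔸)‖
    · calc ‖x ^ m‖ ≤ ‖x‖ ^ m := norm_pow_le' x hm
        _ ≤ M * ‖x‖ ^ m := by
          nlinarith [pow_nonneg (norm_nonneg x) m]
  apply Summable.of_norm_bounded (g := fun m => M * ((r * ‖x‖) ^ m / Nat.factorial m))
  · simpa [mul_div_assoc] using ((Real.summable_pow_div_factorial (r * ‖x‖)).mul_left M)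
  · intro m
    have h1 : ‖a m • x ^ m‖ ≤ ‖a m‖ * ‖x ^ m‖ := _root_.norm_smul_le _ _
    have h2 : ‖a m‖ * ‖x ^ m‖ ≤ (r ^ m / Nat.factorial m) * (M * ‖x‖ ^ m) := by
      refine mul_le_mul (h m) (hM m) (norm_nonneg _) ?_
      have : (0:ℝ) ≤ r ^ m / Nat.factorial m := le_trans (norm_nonneg _) (h m)
      exact this
    have h3 : (r ^ m / Nat.factorial m) * (M * ‖x‖ ^ m)
        = M * ((r * ‖x‖) ^ m / Nat.factorial m) := by
      rw [mul_pow]; ring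
    linarith

open NormedSpace in
private lemma exp_of_cube' {𝔸 : Type*} [NormedRing 𝔸] [NormedAlgebra ℂ 𝔸] [CompleteSpace 𝔸]
    (A P : 𝔸) (h3 : A * A * A = -(P * A)) :
    exp A = 1 + (∑' m : ℕ, ((-1 : ℂ) ^ m * ((Nat.factorial (2 * m + 1) : ℂ))⁻¹) • P ^ m) * A
      + (∑' m : ℕ, ((-1 : ℂ) ^ m * ((Nat.factorial (2 * m + 2) : ℂ))⁻¹) • P ^ m) * (A * A) := by
  have hodd : ∀ m : ℕ, A ^ (2 * m + 1) = ((-1 : ℂ) ^ m) • (P ^ m * A) := by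
    intro m
    induction m with
    | zero => simp
    | succ m ih =>
      have h21 : A ^ (2 * (m+1) + 1) = A ^ (2 * m + 1) * (A * A) := by
        rw [show 2 * (m+1) + 1 = (2*m+1) + 2 by ring, pow_add, pow_two]
      rw [h21, ih, smul_mul_assoc, mul_assoc, ← mul_assoc A A A, h3, mul_neg, ← mul_assoc,
        ← pow_succ]
      simp [pow_succ, mul_smul]
  have heven : ∀ m : ℕ, A ^ (2 * m + 2) = ((-1 : ℂ) ^ m) • (P ^ m * (A * A)) := by
    intro m
    rw [show 2 * m + 2 = (2 * m + 1) + 1 by ring, pow_succ, hodd m, smul_mul_assoc, mul_assoc]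
  have hsum : Summable fun k : ℕ => ((Nat.factorial k : ℂ))⁻¹ • A ^ k := expSeries_summable' A
  have hsum1 : Summable fun m : ℕ => ((Nat.factorial (2*m+1) : ℂ))⁻¹ • A ^ (2*m+1) := by
    have := hsum.comp_injective (i := fun m : ℕ => 2*m+1) (by intro a b hab; simpa using hab)
    simpa [Function.comp_def] using this
  have hsum2 : Summable fun m : ℕ => ((Nat.factorial (2*m+2) : ℂ))⁻¹ • A ^ (2*m+2) := by
    have := hsum.comp_injective (i := fun m : ℕ => 2*m+2) (by intro a b hab; simpa using hab)
    simpa [Function.comp_def] using this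
  have heo : (∑' m : ℕ, ((Nat.factorial (2*m+1) : ℂ))⁻¹ • A ^ (2*m+1))
      + (∑' m : ℕ, ((Nat.factorial (2*m+2) : ℂ))⁻¹ • A ^ (2*m+2))
      = ∑' k : ℕ, ((Nat.factorial (k+1) : ℂ))⁻¹ • A ^ (k+1) :=
    tsum_even_add_odd (f := fun k => ((Nat.factorial (k+1) : ℂ))⁻¹ • A ^ (k+1)) hsum1 hsum2
  have hsplit : (∑' k : ℕ, ((Nat.factorial k : ℂ))⁻¹ • A ^ k)
      = 1 + ((∑' m : ℕ, ((Nat.factorial (2*m+1) : ℂ))⁻¹ • A ^ (2*m+1))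
        + (∑' m : ℕ, ((Nat.factorial (2*m+2) : ℂ))⁻¹ • A ^ (2*m+2))) := by
    rw [Summable.tsum_eq_zero_add hsum, heo]
    simp
  have hP1 : Summable fun m : ℕ => ((-1 : ℂ) ^ m * ((Nat.factorial (2 * m + 1) : ℂ))⁻¹) • P ^ m := by
    apply summable_smul_pow' P 1
    intro m
    simp only [norm_mul, norm_pow, norm_neg, norm_one, one_pow, one_mul, norm_inv,
      Complex.norm_natCast, one_div]
    apply inv_anti₀
    · exact_mod_cast Nat.factorial_pos m
    · exact_mod_cast Nat.factorial_le (by omega)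
  have hP2 : Summable fun m : ℕ => ((-1 : ℂ) ^ m * ((Nat.factorial (2 * m + 2) : ℂ))⁻¹) • P ^ m := by
    apply summable_smul_pow' P 1
    intro m
    simp only [norm_mul, norm_pow, norm_neg, norm_one, one_pow, one_mul, norm_inv,
      Complex.norm_natCast, one_div]
    apply inv_anti₀
    · exact_mod_cast Nat.factorial_pos m
    · exact_mod_cast Nat.factorial_le (by omega)
  have hterm1 : ∀ m : ℕ, ((Nat.factorial (2*m+1) : ℂ))⁻¹ • A ^ (2*m+1)
      = (((-1 : ℂ) ^ m * ((Nat.factorial (2 * m + 1) : ℂ))⁻¹) • P ^ m) * A := by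
    intro m
    rw [hodd m, smul_smul, smul_mul_assoc, mul_comm ((-1:ℂ)^m)]
  have hterm2 : ∀ m : ℕ, ((Nat.factorial (2*m+2) : ℂ))⁻¹ • A ^ (2*m+2)
      = (((-1 : ℂ) ^ m * ((Nat.factorial (2 * m + 2) : ℂ))⁻¹) • P ^ m) * (A * A) := by
    intro m
    rw [heven m, smul_smul, smul_mul_assoc, mul_comm ((-1:ℂ)^m)]
  calc exp A = ∑' k : ℕ, ((Nat.factorial k : ℂ))⁻¹ • A ^ k := by rw [exp_eq_tsum ℂ]
    _ = 1 + ((∑' m : ℕ, ((Nat.factorial (2*m+1) : ℂ))⁻¹ • A ^ (2*m+1))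
        + (∑' m : ℕ, ((Nat.factorial (2*m+2) : ℂ))⁻¹ • A ^ (2*m+2))) := hsplit
    _ = 1 + (∑' m : ℕ, ((-1 : ℂ) ^ m * ((Nat.factorial (2 * m + 1) : ℂ))⁻¹) • P ^ m) * A
      + (∑' m : ℕ, ((-1 : ℂ) ^ m * ((Nat.factorial (2 * m + 2) : ℂ))⁻¹) • P ^ m) * (A * A) := by
      rw [tsum_congr hterm1, tsum_congr hterm2, hP1.tsum_mul_right A, hP2.tsum_mul_right (A*A),
        add_assoc]

/-- The matrix cosine: `cos A = (exp(iA) + exp(-iA))/2`, with `exp` the matrix exponential. -/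
noncomputable def matCos {ι : Type*} [Fintype ι] [DecidableEq ι]
    (A : Matrix ι ι ℂ) : Matrix ι ι ℂ :=
  (2 : ℂ)⁻¹ • (NormedSpace.exp (Complex.I • A) + NormedSpace.exp ((-Complex.I) • A))

/-- The matrix sine: `sin A = (exp(iA) - exp(-iA))/(2i)`, with `exp` the matrix exponential. -/
noncomputable def matSin {ι : Type*} [Fintype ι] [DecidableEq ι]
    (A : Matrix ι ι ℂ) : Matrix ι ι ℂ :=
  (2 * Complex.I)⁻¹ • (NormedSpace.exp (Complex.I • A) - NormedSpace.exp ((-Complex.I) • A))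

set_option maxHeartbeats 2000000 in
/-- explicit block formulas for `cos(tΛ)` and `sin(tΛ)` where `Λ = i·K`
and `K` is the cross-product block matrix of pairwise commuting `Ω1, Ω2, Ω3`
(Proposition 2.2 of the paper). -/
theorem cos_sin_block_formulas {n : ℕ} (Ω1 Ω2 Ω3 : Matrix (Fin n) (Fin n) ℂ)
    (h12 : Ω1 * Ω2 = Ω2 * Ω1) (h13 : Ω1 * Ω3 = Ω3 * Ω1) (h23 : Ω2 * Ω3 = Ω3 * Ω2)
    (t : ℝ)
    (Ψ St Ct : Matrix (Fin n) (Fin n) ℂ)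
    (hΨ : Ψ = Ω1 ^ 2 + Ω2 ^ 2 + Ω3 ^ 2)
    (hSt : St = ∑' m : ℕ,
      ((-1 : ℂ) ^ m * (t : ℂ) ^ (2 * m) * ((Nat.factorial (2 * m + 1) : ℂ))⁻¹) • Ψ ^ m)
    (hCt : Ct = ∑' m : ℕ,
      ((-1 : ℂ) ^ (m + 1) * (t : ℂ) ^ (2 * m) * ((Nat.factorial (2 * m + 2) : ℂ))⁻¹) • Ψ ^ m)
    (K Λ : Matrix (Fin 3 × Fin n) (Fin 3 × Fin n) ℂ)
    (hK : K = blockMat3 ![![0, -Ω3, Ω2], ![Ω3, 0, -Ω1], ![-Ω2, Ω1, 0]])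
    (hΛ : Λ = Complex.I • K) :
    matCos ((t : ℂ) • Λ) = blockMat3
      ![![1 + ((t : ℂ) ^ 2) • ((Ω3 ^ 2 + Ω2 ^ 2) * Ct),
          -(((t : ℂ) ^ 2) • (Ω2 * Ω1 * Ct)),
          -(((t : ℂ) ^ 2) • (Ω3 * Ω1 * Ct))],
        ![-(((t : ℂ) ^ 2) • (Ω2 * Ω1 * Ct)),
          1 + ((t : ℂ) ^ 2) • ((Ω3 ^ 2 + Ω1 ^ 2) * Ct),
          -(((t : ℂ) ^ 2) • (Ω3 * Ω2 * Ct))],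
        ![-(((t : ℂ) ^ 2) • (Ω3 * Ω1 * Ct)),
          -(((t : ℂ) ^ 2) • (Ω3 * Ω2 * Ct)),
          1 + ((t : ℂ) ^ 2) • ((Ω2 ^ 2 + Ω1 ^ 2) * Ct)]] ∧
    matSin ((t : ℂ) • Λ) = blockMat3
      ![![0, -((Complex.I * (t : ℂ)) • (Ω3 * St)), (Complex.I * (t : ℂ)) • (Ω2 * St)],
        ![(Complex.I * (t : ℂ)) • (Ω3 * St), 0, -((Complex.I * (t : ℂ)) • (Ω1 * St))],
        ![-((Complex.I * (t : ℂ)) • (Ω2 * St)), (Complex.I * (t : ℂ)) • (Ω1 * St), 0]] := by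
  letI : SeminormedRing (Matrix (Fin n) (Fin n) ℂ) := Matrix.linftyOpSemiNormedRing
  letI : NormedRing (Matrix (Fin n) (Fin n) ℂ) := Matrix.linftyOpNormedRing
  letI : NormedAlgebra ℂ (Matrix (Fin n) (Fin n) ℂ) := Matrix.linftyOpNormedAlgebra
  letI : SeminormedRing (Matrix (Fin 3) (Fin 3) (Matrix (Fin n) (Fin n) ℂ)) :=
    Matrix.linftyOpSemiNormedRing
  letI : NormedRing (Matrix (Fin 3) (Fin 3) (Matrix (Fin n) (Fin n) ℂ)) :=
    Matrix.linftyOpNormedRing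
  letI : NormedAlgebra ℂ (Matrix (Fin 3) (Fin 3) (Matrix (Fin n) (Fin n) ℂ)) :=
    Matrix.linftyOpNormedAlgebra
  letI : SeminormedRing (Matrix (Fin 3 × Fin n) (Fin 3 × Fin n) ℂ) :=
    Matrix.linftyOpSemiNormedRing
  letI : NormedRing (Matrix (Fin 3 × Fin n) (Fin 3 × Fin n) ℂ) := Matrix.linftyOpNormedRing
  letI : NormedAlgebra ℂ (Matrix (Fin 3 × Fin n) (Fin 3 × Fin n) ℂ) :=
    Matrix.linftyOpNormedAlgebra
  -- commuting infrastructure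
  have h12' : ∀ X, Ω1 * (Ω2 * X) = Ω2 * (Ω1 * X) := fun X => by
    rw [← mul_assoc, h12, mul_assoc]
  have h13' : ∀ X, Ω1 * (Ω3 * X) = Ω3 * (Ω1 * X) := fun X => by
    rw [← mul_assoc, h13, mul_assoc]
  have h23' : ∀ X, Ω2 * (Ω3 * X) = Ω3 * (Ω2 * X) := fun X => by
    rw [← mul_assoc, h23, mul_assoc]
  have hΨ1 : Commute Ω1 Ψ := by
    rw [hΨ]
    exact (((Commute.refl Ω1).pow_right 2).add_right
      ((show Commute Ω1 Ω2 from h12).pow_right 2)).add_right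
        ((show Commute Ω1 Ω3 from h13).pow_right 2)
  have hΨ2 : Commute Ω2 Ψ := by
    rw [hΨ]
    exact (((show Commute Ω2 Ω1 from h12.symm).pow_right 2).add_right
      ((Commute.refl Ω2).pow_right 2)).add_right
        ((show Commute Ω2 Ω3 from h23).pow_right 2)
  have hΨ3 : Commute Ω3 Ψ := by
    rw [hΨ]
    exact (((show Commute Ω3 Ω1 from h13.symm).pow_right 2).add_right
      ((show Commute Ω3 Ω2 from h23.symm).pow_right 2)).add_right
        ((Commute.refl Ω3).pow_right 2)
  -- the 3×3 matrix over the matrix ring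
  set K₃ : Matrix (Fin 3) (Fin 3) (Matrix (Fin n) (Fin n) ℂ) :=
    Matrix.of ![![0, -Ω3, Ω2], ![Ω3, 0, -Ω1], ![-Ω2, Ω1, 0]] with hk3
  set Ψd : Matrix (Fin 3) (Fin 3) (Matrix (Fin n) (Fin n) ℂ) :=
    Matrix.diagonal (fun _ => Ψ) with hpsid
  -- the cube identity
  have hK3cube : K₃ * K₃ * K₃ = -(Ψd * K₃) := by
    set W : Matrix (Fin 3) (Fin 3) (Matrix (Fin n) (Fin n) ℂ) :=
      Matrix.of ![![Ω1*Ω1, Ω1*Ω2, Ω1*Ω3], ![Ω2*Ω1, Ω2*Ω2, Ω2*Ω3], ![Ω3*Ω1, Ω3*Ω2, Ω3*Ω3]] with hw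
    have hWK : W * K₃ = 0 := by
      rw [← Matrix.ext_iff]
      intro i j
      fin_cases i <;> fin_cases j <;>
        simp [hw, hk3, Matrix.mul_apply, Fin.sum_univ_three, mul_assoc, h12, h13, h23,
          h12', h13', h23']
    have hK2 : K₃ * K₃ = W - Ψd := by
      rw [← Matrix.ext_iff]
      intro i j
      fin_cases i <;> fin_cases j <;>
        simp [hw, hk3, hpsid, Matrix.mul_apply, Fin.sum_univ_three, Matrix.diagonal, hΨ, pow_two,
          h12, h13, h23] <;>
        noncomm_ring
    rw [hK2, sub_mul, hWK, zero_sub]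
  -- the embedding
  set e := Matrix.compAlgEquiv (Fin 3) (Fin n) ℂ ℂ with he
  have hcont : Continuous e :=
    LinearMap.continuous_of_finiteDimensional (AlgEquiv.toLinearMap e)
  have hKe : K = e K₃ := by
    subst hK; rfl
  -- the diagonal embedding as a linear map
  set dL : Matrix (Fin n) (Fin n) ℂ →ₗ[ℂ] Matrix (Fin 3) (Fin 3) (Matrix (Fin n) (Fin n) ℂ) :=
    { toFun := fun X => Matrix.diagonal (fun _ => X),
      map_add' := fun X Y => (Matrix.diagonal_add _ _).symm,
      map_smul' := fun c X => by exact Matrix.diagonal_smul c (fun _ : Fin 3 => X) } with hdL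
  have hdLc : Continuous dL := LinearMap.continuous_of_finiteDimensional dL
  -- transfer the tsum hypotheses to this topology (they are defeq)
  have hSt' : St = ∑' m : ℕ,
      ((-1 : ℂ) ^ m * (t : ℂ) ^ (2 * m) * ((Nat.factorial (2 * m + 1) : ℂ))⁻¹) • Ψ ^ m := hSt
  have hCt' : Ct = ∑' m : ℕ,
      ((-1 : ℂ) ^ (m + 1) * (t : ℂ) ^ (2 * m) * ((Nat.factorial (2 * m + 2) : ℂ))⁻¹) • Ψ ^ m := hCt
  -- summability of the coefficient series
  have hfac : ∀ m d : ℕ, ‖((-1 : ℂ) ^ m * (t : ℂ) ^ (2 * m) * ((Nat.factorial (2 * m + d) : ℂ))⁻¹)‖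
      ≤ ((t:ℝ)^2) ^ m / Nat.factorial m := by
    intro m d
    simp only [norm_mul, norm_pow, norm_neg, norm_one, one_pow, one_mul, norm_inv,
      Complex.norm_natCast, Complex.norm_real, Real.norm_eq_abs]
    rw [show |t| ^ (2*m) = ((t:ℝ)^2)^m by rw [pow_mul, sq_abs], div_eq_mul_inv]
    have h1 : ((Nat.factorial m : ℝ))⁻¹ ≥ ((Nat.factorial (2*m+d) : ℝ))⁻¹ := by
      apply inv_anti₀
      · exact_mod_cast Nat.factorial_pos m
      · exact_mod_cast Nat.factorial_le (by omega)
    have h2 : (0:ℝ) ≤ ((t:ℝ)^2)^m := by positivity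
    exact mul_le_mul_of_nonneg_left h1 h2
  have hsumS : Summable (fun m : ℕ =>
      ((-1 : ℂ) ^ m * (t : ℂ) ^ (2 * m) * ((Nat.factorial (2 * m + 1) : ℂ))⁻¹) • Ψ ^ m) := by
    apply summable_smul_pow' Ψ ((t:ℝ)^2)
    intro m
    exact hfac m 1
  have hsumC : Summable (fun m : ℕ =>
      ((-1 : ℂ) ^ m * (t : ℂ) ^ (2 * m) * ((Nat.factorial (2 * m + 2) : ℂ))⁻¹) • Ψ ^ m) := by
    apply summable_smul_pow' Ψ ((t:ℝ)^2)
    intro m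
    exact hfac m 2
  -- powers of the diagonal
  have hdpow : ∀ m : ℕ, Ψd ^ m = Matrix.diagonal (fun _ : Fin 3 => Ψ ^ m) := by
    intro m
    induction m with
    | zero => simp [hpsid, Matrix.diagonal_one]
    | succ m ih =>
      rw [pow_succ, ih, hpsid, Matrix.diagonal_mul_diagonal]
      simp [pow_succ]
  -- identify the two series as diagonal matrices
  have hSser : (∑' m : ℕ, ((-1 : ℂ) ^ m * ((Nat.factorial (2 * m + 1) : ℂ))⁻¹)
        • (((t:ℂ)^2) • Ψd) ^ m)
      = Matrix.diagonal (fun _ : Fin 3 => St) := by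
    have h1 : ∀ m : ℕ, ((-1 : ℂ) ^ m * ((Nat.factorial (2 * m + 1) : ℂ))⁻¹)
          • (((t:ℂ)^2) • Ψd) ^ m
        = dL (((-1 : ℂ) ^ m * (t : ℂ) ^ (2 * m) * ((Nat.factorial (2 * m + 1) : ℂ))⁻¹) • Ψ ^ m) := by
      intro m
      rw [smul_pow, hdpow m, _root_.map_smul, smul_smul]
      show _ • Matrix.diagonal (fun _ : Fin 3 => Ψ ^ m)
        = _ • Matrix.diagonal (fun _ : Fin 3 => Ψ ^ m)
      congr 1
      rw [pow_mul]
      ring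
    have h2 : (∑' m : ℕ, dL (((-1 : ℂ) ^ m * (t : ℂ) ^ (2 * m)
          * ((Nat.factorial (2 * m + 1) : ℂ))⁻¹) • Ψ ^ m))
        = dL (∑' m : ℕ, ((-1 : ℂ) ^ m * (t : ℂ) ^ (2 * m)
          * ((Nat.factorial (2 * m + 1) : ℂ))⁻¹) • Ψ ^ m) :=
      (hsumS.hasSum.map dL hdLc).tsum_eq
    rw [tsum_congr h1, h2, ← hSt']
    rfl
  have hCser : (∑' m : ℕ, ((-1 : ℂ) ^ m * ((Nat.factorial (2 * m + 2) : ℂ))⁻¹)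
        • (((t:ℂ)^2) • Ψd) ^ m)
      = -(Matrix.diagonal (fun _ : Fin 3 => Ct)) := by
    have h1 : ∀ m : ℕ, ((-1 : ℂ) ^ m * ((Nat.factorial (2 * m + 2) : ℂ))⁻¹)
          • (((t:ℂ)^2) • Ψd) ^ m
        = dL (((-1 : ℂ) ^ m * (t : ℂ) ^ (2 * m) * ((Nat.factorial (2 * m + 2) : ℂ))⁻¹) • Ψ ^ m) := by
      intro m
      rw [smul_pow, hdpow m, _root_.map_smul, smul_smul]
      show _ • Matrix.diagonal (fun _ : Fin 3 => Ψ ^ m)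
        = _ • Matrix.diagonal (fun _ : Fin 3 => Ψ ^ m)
      congr 1
      rw [pow_mul]
      ring
    have h2 : (∑' m : ℕ, dL (((-1 : ℂ) ^ m * (t : ℂ) ^ (2 * m)
          * ((Nat.factorial (2 * m + 2) : ℂ))⁻¹) • Ψ ^ m))
        = dL (∑' m : ℕ, ((-1 : ℂ) ^ m * (t : ℂ) ^ (2 * m)
          * ((Nat.factorial (2 * m + 2) : ℂ))⁻¹) • Ψ ^ m) :=
      (hsumC.hasSum.map dL hdLc).tsum_eq
    have h3 : (∑' m : ℕ, ((-1 : ℂ) ^ m * (t : ℂ) ^ (2 * m)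
          * ((Nat.factorial (2 * m + 2) : ℂ))⁻¹) • Ψ ^ m) = -Ct := by
      rw [hCt', ← tsum_neg]
      apply tsum_congr
      intro m
      rw [← neg_smul]
      congr 1
      rw [pow_succ]
      ring
    rw [tsum_congr h1, h2, h3, map_neg]
    rfl
  -- commuting of St, Ct with the Ωi
  have hcS1 : St * Ω1 = Ω1 * St := by
    rw [hSt']
    exact (Commute.tsum_right Ω1 fun m => ((hΨ1.pow_right m).smul_right _)).eq.symm
  have hcS2 : St * Ω2 = Ω2 * St := by
    rw [hSt']
    exact (Commute.tsum_right Ω2 fun m => ((hΨ2.pow_right m).smul_right _)).eq.symm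
  have hcS3 : St * Ω3 = Ω3 * St := by
    rw [hSt']
    exact (Commute.tsum_right Ω3 fun m => ((hΨ3.pow_right m).smul_right _)).eq.symm
  have hcC1 : Ct * Ω1 = Ω1 * Ct := by
    rw [hCt']
    exact (Commute.tsum_right Ω1 fun m => ((hΨ1.pow_right m).smul_right _)).eq.symm
  have hcC2 : Ct * Ω2 = Ω2 * Ct := by
    rw [hCt']
    exact (Commute.tsum_right Ω2 fun m => ((hΨ2.pow_right m).smul_right _)).eq.symm
  have hcC3 : Ct * Ω3 = Ω3 * Ct := by
    rw [hCt']
    exact (Commute.tsum_right Ω3 fun m => ((hΨ3.pow_right m).smul_right _)).eq.symm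
  have hcC1' : ∀ X, Ct * (Ω1 * X) = Ω1 * (Ct * X) := fun X => by
    rw [← mul_assoc, hcC1, mul_assoc]
  have hcC2' : ∀ X, Ct * (Ω2 * X) = Ω2 * (Ct * X) := fun X => by
    rw [← mul_assoc, hcC2, mul_assoc]
  have hcC3' : ∀ X, Ct * (Ω3 * X) = Ω3 * (Ct * X) := fun X => by
    rw [← mul_assoc, hcC3, mul_assoc]
  -- the diagonal series matrices
  set SD : Matrix (Fin 3) (Fin 3) (Matrix (Fin n) (Fin n) ℂ) :=
    Matrix.diagonal (fun _ => St) with hSD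
  set CD : Matrix (Fin 3) (Fin 3) (Matrix (Fin n) (Fin n) ℂ) :=
    Matrix.diagonal (fun _ => Ct) with hCD
  -- the exponential formula for c • K₃
  have hexpc : ∀ c : ℂ, c * c * c = (t:ℂ)^2 * c →
      NormedSpace.exp (c • K₃) = 1 + SD * (c • K₃) + (-CD) * ((c • K₃) * (c • K₃)) := by
    intro c hc
    have h3 : (c • K₃) * (c • K₃) * (c • K₃) = -((((t:ℂ)^2) • Ψd) * (c • K₃)) := by
      rw [smul_mul_smul_comm c K₃ c K₃, smul_mul_smul_comm (c*c) (K₃*K₃) c K₃, hK3cube, smul_neg,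
        smul_mul_smul_comm ((t:ℂ)^2) Ψd c K₃, hc]
    refine (exp_of_cube' (c • K₃) (((t:ℂ)^2) • Ψd) h3).trans ?_
    erw [hSser, hCser]
  -- rewriting the arguments
  have hargI : Complex.I • ((t : ℂ) • Λ) = (-(t:ℂ)) • K := by
    rw [hΛ, smul_smul, smul_smul]
    congr 1
    rw [mul_right_comm, Complex.I_mul_I, neg_one_mul]
  have hargmI : (-Complex.I) • ((t : ℂ) • Λ) = ((t:ℂ)) • K := by
    rw [hΛ, smul_smul, smul_smul]
    congr 1
    rw [mul_right_comm, neg_mul, Complex.I_mul_I]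
    ring
  -- the two exponentials
  letI : NormedAlgebra ℚ (Matrix (Fin 3) (Fin 3) (Matrix (Fin n) (Fin n) ℂ)) :=
    NormedAlgebra.restrictScalars ℚ ℂ _
  have hexpP : NormedSpace.exp ((t:ℂ) • K)
      = e (1 + SD * ((t:ℂ) • K₃) + (-CD) * (((t:ℂ) • K₃) * ((t:ℂ) • K₃))) := by
    erw [hKe, ← _root_.map_smul, ← NormedSpace.map_exp e hcont, hexpc (t:ℂ) (by ring)]
  have hexpM : NormedSpace.exp ((-(t:ℂ)) • K)
      = e (1 + SD * ((-(t:ℂ)) • K₃) + (-CD) * (((-(t:ℂ)) • K₃) * ((-(t:ℂ)) • K₃))) := by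
    erw [hKe, ← _root_.map_smul, ← NormedSpace.map_exp e hcont, hexpc (-(t:ℂ)) (by ring)]
  constructor
  · -- cosine
    have hcos : (2 : ℂ)⁻¹ • (NormedSpace.exp (Complex.I • ((t : ℂ) • Λ))
          + NormedSpace.exp ((-Complex.I) • ((t : ℂ) • Λ)))
        = blockMat3
          ![![1 + ((t : ℂ) ^ 2) • ((Ω3 ^ 2 + Ω2 ^ 2) * Ct),
              -(((t : ℂ) ^ 2) • (Ω2 * Ω1 * Ct)),
              -(((t : ℂ) ^ 2) • (Ω3 * Ω1 * Ct))],
            ![-(((t : ℂ) ^ 2) • (Ω2 * Ω1 * Ct)),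
              1 + ((t : ℂ) ^ 2) • ((Ω3 ^ 2 + Ω1 ^ 2) * Ct),
              -(((t : ℂ) ^ 2) • (Ω3 * Ω2 * Ct))],
            ![-(((t : ℂ) ^ 2) • (Ω3 * Ω1 * Ct)),
              -(((t : ℂ) ^ 2) • (Ω3 * Ω2 * Ct)),
              1 + ((t : ℂ) ^ 2) • ((Ω2 ^ 2 + Ω1 ^ 2) * Ct)]] := by
      rw [hargI, hargmI, hexpM, hexpP, ← _root_.map_add, ← _root_.map_smul]
      have hmid : (2:ℂ)⁻¹ • ((1 + SD * ((-(t:ℂ)) • K₃)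
              + (-CD) * (((-(t:ℂ)) • K₃) * ((-(t:ℂ)) • K₃)))
            + (1 + SD * ((t:ℂ) • K₃) + (-CD) * (((t:ℂ) • K₃) * ((t:ℂ) • K₃))))
          = 1 + ((t:ℂ)^2) • ((-CD) * (K₃ * K₃)) := by
        rw [smul_mul_smul_comm ((-(t:ℂ))) K₃ ((-(t:ℂ))) K₃,
          smul_mul_smul_comm ((t:ℂ)) K₃ ((t:ℂ)) K₃,
          mul_smul_comm ((-(t:ℂ))) SD K₃, mul_smul_comm ((t:ℂ)) SD K₃,
          mul_smul_comm ((-(t:ℂ)) * (-(t:ℂ))) (-CD) (K₃ * K₃),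
          mul_smul_comm ((t:ℂ) * (t:ℂ)) (-CD) (K₃ * K₃)]
        module
      rw [hmid]
      have hentries : (1 : Matrix (Fin 3) (Fin 3) (Matrix (Fin n) (Fin n) ℂ))
            + ((t:ℂ)^2) • ((-CD) * (K₃ * K₃))
          = Matrix.of
            ![![1 + ((t : ℂ) ^ 2) • ((Ω3 ^ 2 + Ω2 ^ 2) * Ct),
                -(((t : ℂ) ^ 2) • (Ω2 * Ω1 * Ct)),
                -(((t : ℂ) ^ 2) • (Ω3 * Ω1 * Ct))],
              ![-(((t : ℂ) ^ 2) • (Ω2 * Ω1 * Ct)),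
                1 + ((t : ℂ) ^ 2) • ((Ω3 ^ 2 + Ω1 ^ 2) * Ct),
                -(((t : ℂ) ^ 2) • (Ω3 * Ω2 * Ct))],
              ![-(((t : ℂ) ^ 2) • (Ω3 * Ω1 * Ct)),
                -(((t : ℂ) ^ 2) • (Ω3 * Ω2 * Ct)),
                1 + ((t : ℂ) ^ 2) • ((Ω2 ^ 2 + Ω1 ^ 2) * Ct)]] := by
        rw [← Matrix.ext_iff]
        intro i j
        fin_cases i <;> fin_cases j <;>
          simp [hCD, hk3, Matrix.mul_apply, Fin.sum_univ_three, Matrix.diagonal,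
            Matrix.one_apply, pow_two, mul_add, add_mul, mul_neg, neg_mul, smul_neg, smul_add,
            mul_assoc, h12, h13, h23, h12', h13', h23', hcC1, hcC2, hcC3, hcC1', hcC2', hcC3'] <;>
          (try abel)
      rw [hentries]
      rfl
    exact hcos
  · -- sine
    have hsin : (2 * Complex.I)⁻¹ • (NormedSpace.exp (Complex.I • ((t : ℂ) • Λ))
          - NormedSpace.exp ((-Complex.I) • ((t : ℂ) • Λ)))
        = blockMat3
          ![![0, -((Complex.I * (t : ℂ)) • (Ω3 * St)), (Complex.I * (t : ℂ)) • (Ω2 * St)],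
            ![(Complex.I * (t : ℂ)) • (Ω3 * St), 0, -((Complex.I * (t : ℂ)) • (Ω1 * St))],
            ![-((Complex.I * (t : ℂ)) • (Ω2 * St)), (Complex.I * (t : ℂ)) • (Ω1 * St), 0]] := by
      rw [hargI, hargmI, hexpM, hexpP, ← map_sub, ← _root_.map_smul]
      have hmid : (2 * Complex.I)⁻¹ • ((1 + SD * ((-(t:ℂ)) • K₃)
              + (-CD) * (((-(t:ℂ)) • K₃) * ((-(t:ℂ)) • K₃)))
            - (1 + SD * ((t:ℂ) • K₃) + (-CD) * (((t:ℂ) • K₃) * ((t:ℂ) • K₃))))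
          = (Complex.I * (t:ℂ)) • (SD * K₃) := by
        rw [mul_inv, Complex.inv_I, smul_mul_smul_comm ((-(t:ℂ))) K₃ ((-(t:ℂ))) K₃,
          smul_mul_smul_comm ((t:ℂ)) K₃ ((t:ℂ)) K₃,
          mul_smul_comm ((-(t:ℂ))) SD K₃, mul_smul_comm ((t:ℂ)) SD K₃,
          mul_smul_comm ((-(t:ℂ)) * (-(t:ℂ))) (-CD) (K₃ * K₃),
          mul_smul_comm ((t:ℂ) * (t:ℂ)) (-CD) (K₃ * K₃)]
        have hdiff : (1 + (-(t:ℂ)) • (SD * K₃) + ((-(t:ℂ)) * (-(t:ℂ))) • (-CD * (K₃ * K₃)))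
              - (1 + (t:ℂ) • (SD * K₃) + ((t:ℂ) * (t:ℂ)) • (-CD * (K₃ * K₃)))
            = (-(2*(t:ℂ))) • (SD * K₃) := by
          module
        rw [hdiff, smul_smul]
        congr 1
        field_simp
      rw [hmid]
      have hentries : (Complex.I * (t:ℂ)) • (SD * K₃)
          = Matrix.of
            ![![0, -((Complex.I * (t : ℂ)) • (Ω3 * St)), (Complex.I * (t : ℂ)) • (Ω2 * St)],
              ![(Complex.I * (t : ℂ)) • (Ω3 * St), 0, -((Complex.I * (t : ℂ)) • (Ω1 * St))],
              ![-((Complex.I * (t : ℂ)) • (Ω2 * St)), (Complex.I * (t : ℂ)) • (Ω1 * St), 0]] := by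
        rw [← Matrix.ext_iff]
        intro i j
        fin_cases i <;> fin_cases j <;>
          simp [hSD, hk3, Matrix.mul_apply, Fin.sum_univ_three, Matrix.diagonal,
            mul_neg, neg_mul, smul_neg, hcS1, hcS2, hcS3]
      rw [hentries]
      rfl
    exact hsin
end
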